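/- arXiv:1712.05707 — 4 statements merged into one kernel-verified Lean document; each statement's English description precedes it below -/
import Mathlib

section
/- For n ≥ 2 and (s₁,…,s_{n-1},p) ∈ ℂⁿ, the point (s₁,…,s_{n-1},p) belongs to 𝔾ₙ if and only if |p| < 1 and there exists (c₁,…,c_{n-1}) ∈ 𝔾_{n-1} such that sᵢ = cᵢ + conj(c_{n-i})·p for every i = 1,…,n-1. -/
open Finset

/-- The `k`-th elementary symmetric polynomial of `z₁, …, zₙ`. -/
noncomputable def esymC (n k : ℕ) (z : Fin n → ℂ) : ℂ :=
  ∑ t ∈ Finset.powersetCard k (Finset.univ : Finset (Fin n)), ∏ j ∈ t, z j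

/-- The symmetrization map `πₙ(z) = (e₁(z), …, eₙ(z))`. -/
noncomputable def symMap (n : ℕ) (z : Fin n → ℂ) : Fin n → ℂ :=
  fun k => esymC n (k.1 + 1) z

/-- The open symmetrized polydisc `𝔾ₙ`. -/
noncomputable def openSymPolydisc (n : ℕ) : Set (Fin n → ℂ) :=
  {x | ∃ z : Fin n → ℂ, (∀ j, ‖z j‖ < 1) ∧ symMap n z = x}

lemma esymC_eq_esymm (n k : ℕ) (z : Fin n → ℂ) :
    esymC n k z = (Finset.univ.val.map z).esymm k := by
  rw [esymC, Finset.esymm_map_val]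

lemma esymC_zero (n : ℕ) (z : Fin n → ℂ) : esymC n 0 z = 1 := by
  simp [esymC]

lemma esymC_of_gt {n k : ℕ} (h : n < k) (z : Fin n → ℂ) : esymC n k z = 0 := by
  rw [esymC, Finset.powersetCard_eq_empty.mpr (by simpa using h)]
  simp

lemma esymC_top (n : ℕ) (z : Fin n → ℂ) : esymC n n z = ∏ j, z j := by
  have h : Finset.powersetCard n (Finset.univ : Finset (Fin n)) = {Finset.univ} := by
    ext t
    simp only [Finset.mem_powersetCard, Finset.mem_singleton]
    constructor
    · rintro ⟨-, ht⟩
      exact Finset.eq_univ_of_card t (by simpa using ht)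
    · rintro rfl
      simp
  rw [esymC, h]
  simp

lemma esymC_smul (n k : ℕ) (t : ℂ) (z : Fin n → ℂ) :
    esymC n k (fun j => t * z j) = t ^ k * esymC n k z := by
  rw [esymC, esymC, Finset.mul_sum]
  refine Finset.sum_congr rfl fun s hs => ?_
  rw [Finset.prod_mul_distrib, Finset.prod_const, (Finset.mem_powersetCard.mp hs).2]

lemma esymC_conj (n k : ℕ) (z : Fin n → ℂ) :
    esymC n k (fun j => (starRingEnd ℂ) (z j)) = (starRingEnd ℂ) (esymC n k z) := by
  rw [esymC, esymC, map_sum]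
  refine Finset.sum_congr rfl fun s _ => ?_
  rw [map_prod]

lemma prod_add_expand (n : ℕ) (z : Fin n → ℂ) (t : ℂ) :
    ∏ j, (z j + t) = ∑ k ∈ Finset.range (n + 1), esymC n k z * t ^ (n - k) := by
  rw [Finset.prod_add]
  have hcard : (Finset.univ : Finset (Fin n)).card = n := by simp
  rw [Finset.sum_powerset]
  refine Finset.sum_congr (by rw [hcard]) fun k _ => ?_
  rw [esymC, Finset.sum_mul]
  refine Finset.sum_congr rfl fun s hs => ?_
  have hsub := (Finset.mem_powersetCard.mp hs).1
  have hk := (Finset.mem_powersetCard.mp hs).2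
  rw [Finset.prod_const, Finset.card_sdiff_of_subset hsub, hcard, hk]

lemma prod_sub_expand (n : ℕ) (z : Fin n → ℂ) (t : ℂ) :
    ∏ j, (t - z j) = ∑ k ∈ Finset.range (n + 1), (-1) ^ k * esymC n k z * t ^ (n - k) := by
  have h : ∀ j, t - z j = (fun j => (-1) * z j) j + t := by intro j; ring
  rw [Finset.prod_congr rfl fun j _ => h j, prod_add_expand]
  refine Finset.sum_congr rfl fun k _ => ?_
  rw [esymC_smul]

lemma prod_one_sub_expand (n : ℕ) (z : Fin n → ℂ) (t : ℂ) :
    ∏ j, (1 - (starRingEnd ℂ) (z j) * t)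
      = ∑ k ∈ Finset.range (n + 1), (-1) ^ k * (starRingEnd ℂ) (esymC n k z) * t ^ k := by
  have h : ∀ j, 1 - (starRingEnd ℂ) (z j) * t
      = (fun j => (-t) * ((starRingEnd ℂ) (z j))) j + 1 := by intro j; ring
  rw [Finset.prod_congr rfl fun j _ => h j, prod_add_expand]
  refine Finset.sum_congr rfl fun k _ => ?_
  rw [esymC_smul (n := n) (k := k) (-t) (fun j => (starRingEnd ℂ) (z j)), esymC_conj]
  ring

lemma abs_one_sub_conj_mul_le {t w : ℂ} (ht : 1 ≤ ‖t‖) (hw : ‖w‖ ≤ 1) :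
    ‖1 - (starRingEnd ℂ) w * t‖ ≤ ‖t - w‖ := by
  have key : Complex.normSq (t - w) - Complex.normSq (1 - (starRingEnd ℂ) w * t)
      = (Complex.normSq t - 1) * (1 - Complex.normSq w) := by
    simp only [Complex.normSq_apply, Complex.sub_re, Complex.sub_im, Complex.mul_re,
      Complex.mul_im, Complex.conj_re, Complex.conj_im, Complex.one_re, Complex.one_im]
    ring
  have h1 : (1 : ℝ) ≤ Complex.normSq t := by
    rw [← Complex.sq_norm]; nlinarith
  have h2 : Complex.normSq w ≤ 1 := by
    rw [← Complex.sq_norm]; nlinarith [norm_nonneg w]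
  have hle : Complex.normSq (1 - (starRingEnd ℂ) w * t) ≤ Complex.normSq (t - w) := by
    nlinarith
  rw [Complex.norm_def, Complex.norm_def]
  exact Real.sqrt_le_sqrt hle

lemma neg_one_pow_sub_c {a b : ℕ} (h : b ≤ a) : (-1 : ℂ) ^ (a - b) = (-1) ^ a * (-1) ^ b := by
  have h1 : (-1 : ℂ) ^ a = (-1) ^ (a - b) * (-1) ^ b := by
    rw [← pow_add, Nat.sub_add_cancel h]
  rw [h1, mul_assoc, ← pow_add, ← two_mul, pow_mul, neg_one_sq, one_pow, mul_one]

lemma sum1_identity (M : ℕ) (b : ℕ → ℂ) (hb : b (M + 1) = 0) (p t : ℂ) :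
    ∑ k ∈ Finset.range (M + 2),
        (-1) ^ k * (b k + (starRingEnd ℂ) (b (M + 1 - k)) * p) * t ^ (M + 1 - k)
      = t * ∑ k ∈ Finset.range (M + 1), (-1) ^ k * b k * t ^ (M - k)
        + (-1) ^ (M + 1) * p
          * ∑ k ∈ Finset.range (M + 1), (-1) ^ k * (starRingEnd ℂ) (b k) * t ^ k := by
  have split : ∀ k, (-1 : ℂ) ^ k * (b k + (starRingEnd ℂ) (b (M + 1 - k)) * p) * t ^ (M + 1 - k)
      = (-1) ^ k * b k * t ^ (M + 1 - k)
        + (-1) ^ k * (starRingEnd ℂ) (b (M + 1 - k)) * p * t ^ (M + 1 - k) := by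
    intro k; ring
  rw [Finset.sum_congr rfl fun k _ => split k, Finset.sum_add_distrib]
  congr 1
  · rw [Finset.sum_range_succ, hb]
    rw [Finset.mul_sum]
    simp only [mul_zero, zero_mul, mul_zero, add_zero]
    refine Finset.sum_congr rfl fun k hk => ?_
    have hk' : k ≤ M := Nat.lt_succ_iff.mp (Finset.mem_range.mp hk)
    have he : M + 1 - k = (M - k) + 1 := by omega
    rw [he, pow_succ]
    ring
  · rw [← Finset.sum_range_reflect]
    rw [Finset.sum_range_succ]
    have hlast : M + 2 - 1 - (M + 1) = 0 := by omega
    rw [hlast]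
    simp only [Nat.sub_zero, map_zero, hb, map_zero, zero_mul, mul_zero, zero_mul, add_zero]
    rw [Finset.mul_sum]
    refine Finset.sum_congr rfl fun k hk => ?_
    have hk' : k ≤ M := Nat.lt_succ_iff.mp (Finset.mem_range.mp hk)
    have h1 : M + 2 - 1 - k = M + 1 - k := by omega
    have h2 : M + 1 - (M + 1 - k) = k := Nat.sub_sub_self (by omega)
    rw [h1, h2, neg_one_pow_sub_c (show k ≤ M + 1 by omega)]
    ring

lemma sum2_identity (M : ℕ) (b : ℕ → ℂ) (hb : b (M + 1) = 0) (p t : ℂ) :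
    ∑ k ∈ Finset.range (M + 2),
        (-1) ^ k * (starRingEnd ℂ) (b k + (starRingEnd ℂ) (b (M + 1 - k)) * p) * t ^ k
      = ∑ k ∈ Finset.range (M + 1), (-1) ^ k * (starRingEnd ℂ) (b k) * t ^ k
        + (-1) ^ (M + 1) * (starRingEnd ℂ) p
          * (t * ∑ k ∈ Finset.range (M + 1), (-1) ^ k * b k * t ^ (M - k)) := by
  have split : ∀ k, (-1 : ℂ) ^ k
        * (starRingEnd ℂ) (b k + (starRingEnd ℂ) (b (M + 1 - k)) * p) * t ^ k
      = (-1) ^ k * (starRingEnd ℂ) (b k) * t ^ k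
        + (-1) ^ k * b (M + 1 - k) * (starRingEnd ℂ) p * t ^ k := by
    intro k
    rw [map_add, map_mul, Complex.conj_conj]
    ring
  rw [Finset.sum_congr rfl fun k _ => split k, Finset.sum_add_distrib]
  congr 1
  · rw [Finset.sum_range_succ, hb]
    simp
  · rw [← Finset.sum_range_reflect]
    rw [Finset.sum_range_succ]
    have hlast : M + 2 - 1 - (M + 1) = 0 := by omega
    rw [hlast]
    simp only [Nat.sub_zero, hb, zero_mul, mul_zero, zero_mul, add_zero]
    rw [Finset.mul_sum, Finset.mul_sum]
    refine Finset.sum_congr rfl fun k hk => ?_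
    have hk' : k ≤ M := Nat.lt_succ_iff.mp (Finset.mem_range.mp hk)
    have h1 : M + 2 - 1 - k = M + 1 - k := by omega
    have h2 : M + 1 - (M + 1 - k) = k := Nat.sub_sub_self (by omega)
    have h3 : M + 1 - k = (M - k) + 1 := by omega
    rw [h1, h2, neg_one_pow_sub_c (show k ≤ M + 1 by omega), h3, pow_succ]
    ring

open Polynomial in
lemma symMap_surjective (n : ℕ) : Function.Surjective (symMap n) := by
  classical
  intro a
  rcases Nat.eq_zero_or_pos n with rfl | hn
  · exact ⟨a, funext fun k => k.elim0⟩
  set q : ℂ[X] := ∑ k : Fin n, Polynomial.C ((-1) ^ (k.1 + 1) * a k) * Polynomial.X ^ (n - (k.1 + 1))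
    with hq
  have hqdeg : q.degree < (n : WithBot ℕ) := by
    refine lt_of_le_of_lt (Polynomial.degree_sum_le _ _) ?_
    rw [Finset.sup_lt_iff (by exact_mod_cast WithBot.bot_lt_coe n)]
    intro k _
    refine lt_of_le_of_lt (Polynomial.degree_C_mul_X_pow_le _ _) ?_
    exact_mod_cast Nat.sub_lt hn (Nat.succ_pos _)
  set P : ℂ[X] := Polynomial.X ^ n + q with hP
  have hmonic : P.Monic := by
    refine (Polynomial.monic_X_pow n).add_of_left ?_
    rwa [Polynomial.degree_X_pow]
  have hPdeg : P.degree = n := by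
    rw [hP, Polynomial.degree_add_eq_left_of_degree_lt (by rwa [Polynomial.degree_X_pow]),
      Polynomial.degree_X_pow]
  have hnat : P.natDegree = n := Polynomial.natDegree_eq_of_degree_eq_some hPdeg
  have hcard : Multiset.card P.roots = n := by
    rw [← hnat]
    exact Polynomial.splits_iff_card_roots.mp (IsAlgClosed.splits P)
  have hcoeff : ∀ j : Fin n, P.coeff (n - (j.1 + 1)) = (-1) ^ (j.1 + 1) * a j := by
    intro j
    have hlt : n - (j.1 + 1) < n := Nat.sub_lt hn (Nat.succ_pos _)
    rw [hP, Polynomial.coeff_add, Polynomial.coeff_X_pow, if_neg (by omega)]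
    rw [hq, Polynomial.finset_sum_coeff]
    rw [Finset.sum_eq_single j]
    · rw [Polynomial.coeff_C_mul, Polynomial.coeff_X_pow, if_pos rfl, mul_one, zero_add]
    · intro k _ hkj
      rw [Polynomial.coeff_C_mul, Polynomial.coeff_X_pow, if_neg, mul_zero]
      intro hEq
      apply hkj
      have : k.1 = j.1 := by omega
      exact Fin.ext this
    · intro h
      exact absurd (Finset.mem_univ j) h
  have hesymm : ∀ j : Fin n, P.roots.esymm (j.1 + 1) = a j := by
    intro j
    have hkle : n - (j.1 + 1) ≤ P.natDegree := by omega
    have := Polynomial.coeff_eq_esymm_roots_of_card (hnat ▸ hcard) hkle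
    rw [hcoeff j, hmonic.leadingCoeff, one_mul, hnat] at this
    have hj : n - (n - (j.1 + 1)) = j.1 + 1 := by omega
    rw [hj] at this
    exact (mul_left_cancel₀ (pow_ne_zero _ (neg_ne_zero.mpr one_ne_zero)) this.symm)
  set l : List ℂ := P.roots.toList with hlDef
  have hl : l.length = n := by rw [hlDef, Multiset.length_toList, hcard]
  refine ⟨fun j => l.get (Fin.cast hl.symm j), funext fun j => ?_⟩
  have hofn : List.ofFn (fun j : Fin n => l.get (Fin.cast hl.symm j)) = l := by
    apply List.ext_get (by simp [hl])
    intro i h1 h2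
    simp
  have hmap : (Finset.univ.val.map fun j : Fin n => l.get (Fin.cast hl.symm j)) = P.roots := by
    rw [Fin.univ_val_map, hofn, hlDef, Multiset.coe_toList]
  rw [symMap, esymC_eq_esymm, hmap, hesymm j]

lemma solve_rel {p u v : ℂ} (hD0 : (1 - (starRingEnd ℂ) p * p) ≠ 0) :
    u = (u - (starRingEnd ℂ) v * p) / (1 - (starRingEnd ℂ) p * p)
      + (starRingEnd ℂ) ((v - (starRingEnd ℂ) u * p) / (1 - (starRingEnd ℂ) p * p)) * p := by
  have hDc : (starRingEnd ℂ) (1 - (starRingEnd ℂ) p * p) = 1 - (starRingEnd ℂ) p * p := by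
    rw [map_sub, map_one, map_mul, Complex.conj_conj]; ring
  rw [map_div₀, hDc, map_sub, map_mul, Complex.conj_conj]
  rw [eq_comm, div_mul_eq_mul_div, ← add_div, div_eq_iff hD0]
  ring

lemma prod_bounds (N : ℕ) (w : Fin N → ℂ) (hw : ∀ j, ‖w j‖ < 1) {t : ℂ}
    (ht : 1 ≤ ‖t‖) :
    0 < ‖∏ j, (t - w j)‖ ∧
      ‖∏ j, (1 - (starRingEnd ℂ) (w j) * t)‖
        ≤ ‖∏ j, (t - w j)‖ := by
  constructor
  · rw [norm_prod]
    refine Finset.prod_pos fun j _ => ?_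
    rw [norm_pos_iff, sub_ne_zero]
    intro h
    have h2 := hw j
    rw [← h] at h2
    linarith
  · rw [norm_prod, norm_prod]
    refine Finset.prod_le_prod (fun j _ => norm_nonneg _) fun j _ =>
      abs_one_sub_conj_mul_le ht (hw j).le

lemma abs_lt_one_of_D_ne {p : ℂ} (hp : ‖p‖ < 1) :
    (1 : ℂ) - (starRingEnd ℂ) p * p ≠ 0 := by
  intro h
  have h1 : (starRingEnd ℂ) p * p = 1 := by
    have := sub_eq_zero.mp h; exact this.symm
  have habs : ‖(starRingEnd ℂ) p * p‖ = 1 := by rw [h1, norm_one]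
  rw [norm_mul, Complex.norm_conj] at habs
  nlinarith [norm_nonneg p]

lemma master1 (m : ℕ) (z : Fin (m + 1) → ℂ) (w : Fin m → ℂ) (p t : ℂ)
    (hrel : ∀ k, k ≤ m + 1 →
      esymC (m + 1) k z = esymC m k w + (starRingEnd ℂ) (esymC m (m + 1 - k) w) * p) :
    ∏ i, (t - z i)
      = t * ∏ i, (t - w i) + (-1) ^ (m + 1) * p * ∏ i, (1 - (starRingEnd ℂ) (w i) * t) := by
  have hb : esymC m (m + 1) w = 0 := esymC_of_gt (by omega : m < m + 1) w
  rw [prod_sub_expand, prod_sub_expand, prod_one_sub_expand]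
  have hcong : ∀ k ∈ Finset.range (m + 2),
      (-1 : ℂ) ^ k * esymC (m + 1) k z * t ^ (m + 1 - k)
        = (-1) ^ k * ((fun k => esymC m k w) k
            + (starRingEnd ℂ) ((fun k => esymC m k w) (m + 1 - k)) * p) * t ^ (m + 1 - k) := by
    intro k hk
    have hk' : k ≤ m + 1 := by have := Finset.mem_range.mp hk; omega
    rw [hrel k hk']
  rw [Finset.sum_congr rfl hcong]
  exact sum1_identity m (fun k => esymC m k w) hb p t

lemma master2 (m : ℕ) (z : Fin (m + 1) → ℂ) (w : Fin m → ℂ) (p t : ℂ)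
    (hrel : ∀ k, k ≤ m + 1 →
      esymC (m + 1) k z = esymC m k w + (starRingEnd ℂ) (esymC m (m + 1 - k) w) * p) :
    ∏ i, (1 - (starRingEnd ℂ) (z i) * t)
      = (∏ i, (1 - (starRingEnd ℂ) (w i) * t))
        + (-1) ^ (m + 1) * (starRingEnd ℂ) p * (t * ∏ i, (t - w i)) := by
  have hb : esymC m (m + 1) w = 0 := esymC_of_gt (by omega : m < m + 1) w
  rw [prod_one_sub_expand, prod_one_sub_expand, prod_sub_expand]
  have hcong : ∀ k ∈ Finset.range (m + 2),
      (-1 : ℂ) ^ k * (starRingEnd ℂ) (esymC (m + 1) k z) * t ^ k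
        = (-1) ^ k * (starRingEnd ℂ) ((fun k => esymC m k w) k
            + (starRingEnd ℂ) ((fun k => esymC m k w) (m + 1 - k)) * p) * t ^ k := by
    intro k hk
    have hk' : k ≤ m + 1 := by have := Finset.mem_range.mp hk; omega
    rw [hrel k hk']
  rw [Finset.sum_congr rfl hcong]
  exact sum2_identity m (fun k => esymC m k w) hb p t

/-- Costara's characterization: for `n = m + 1 ≥ 2`, a point
`(s₁, …, s_{n-1}, p)` (here `x i.castSucc = s_{i+1}` for `i : Fin m` and
`x (Fin.last m) = p`) lies in `𝔾ₙ` iff `|p| < 1` and there is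
`(c₁, …, c_{n-1}) ∈ 𝔾_{n-1}` with `sᵢ = cᵢ + conj(c_{n-i}) p` for all
`i = 1, …, n-1` (note `c i.rev = c_{n-i}` when `c i = c_{i+1}`). -/
theorem mem_openSymPolydisc_iff_exists_rep (m : ℕ) (hm : 1 ≤ m)
    (x : Fin (m + 1) → ℂ) :
    x ∈ openSymPolydisc (m + 1) ↔
      ‖x (Fin.last m)‖ < 1 ∧
        ∃ c : Fin m → ℂ, c ∈ openSymPolydisc m ∧
          ∀ i : Fin m,
            x i.castSucc = c i + (starRingEnd ℂ) (c i.rev) * x (Fin.last m) := by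
  constructor
  · rintro ⟨z, hz, hzx⟩
    have hE : ∀ j : Fin (m + 1), esymC (m + 1) (j.1 + 1) z = x j := fun j => congrFun hzx j
    have hpe : esymC (m + 1) (m + 1) z = x (Fin.last m) := hE (Fin.last m)
    set p := x (Fin.last m) with hpdef
    have hpabs : ‖p‖ < 1 := by
      rw [← hpe, esymC_top, norm_prod, Fin.prod_univ_succ]
      calc ‖z 0‖ * ∏ i : Fin m, ‖z i.succ‖
          ≤ ‖z 0‖ * 1 := by
            refine mul_le_mul_of_nonneg_left
              (Finset.prod_le_one (fun i _ => norm_nonneg _) fun i _ => (hz _).le)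
              (norm_nonneg _)
        _ < 1 := by rw [mul_one]; exact hz 0
    refine ⟨hpabs, ?_⟩
    have hDne : (1 : ℂ) - (starRingEnd ℂ) p * p ≠ 0 := abs_lt_one_of_D_ne hpabs
    set c : Fin m → ℂ := fun i =>
      (esymC (m + 1) (i.1 + 1) z - (starRingEnd ℂ) (esymC (m + 1) (m - i.1) z) * p)
        / (1 - (starRingEnd ℂ) p * p) with hcdef
    obtain ⟨w, hwc⟩ := symMap_surjective m c
    have hbc : ∀ i : Fin m, esymC m (i.1 + 1) w = c i := fun i => congrFun hwc i
    have hbk : ∀ k, 1 ≤ k → k ≤ m → esymC m k w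
        = (esymC (m + 1) k z - (starRingEnd ℂ) (esymC (m + 1) (m + 1 - k) z) * p)
            / (1 - (starRingEnd ℂ) p * p) := by
      intro k h1 h2
      have h3 := hbc ⟨k - 1, by omega⟩
      simp only [hcdef] at h3
      have e1 : ((⟨k - 1, by omega⟩ : Fin m)).1 + 1 = k := by
        show k - 1 + 1 = k; omega
      have e2 : m - ((⟨k - 1, by omega⟩ : Fin m)).1 = m + 1 - k := by
        show m - (k - 1) = m + 1 - k; omega
      rw [e1, e2] at h3
      exact h3
    have hrelk : ∀ k, k ≤ m + 1 →
        esymC (m + 1) k z = esymC m k w + (starRingEnd ℂ) (esymC m (m + 1 - k) w) * p := by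
      intro k hk
      rcases Nat.eq_zero_or_pos k with rfl | hk1
      · rw [esymC_zero, esymC_zero, Nat.sub_zero, esymC_of_gt (by omega : m < m + 1) w,
          map_zero, zero_mul, add_zero]
      rcases eq_or_lt_of_le hk with rfl | hklt
      · rw [hpe, esymC_of_gt (by omega : m < m + 1) w, Nat.sub_self, esymC_zero,
          map_one, one_mul, zero_add]
      · have hkm : k ≤ m := by omega
        rw [hbk k hk1 hkm, hbk (m + 1 - k) (by omega) (by omega),
          (by omega : m + 1 - (m + 1 - k) = k)]
        exact solve_rel hDne
    refine ⟨c, ⟨w, ?_, hwc⟩, ?_⟩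
    · intro j
      by_contra hcon
      push_neg at hcon
      set t := w j with htdef
      have hG0 : (∏ i, (t - w i)) = 0 :=
        Finset.prod_eq_zero (Finset.mem_univ j) (by rw [htdef, sub_self])
      have hF := master1 m z w p t hrelk
      have hFs := master2 m z w p t hrelk
      rw [hG0, mul_zero, zero_add] at hF
      rw [hG0, mul_zero, mul_zero, add_zero] at hFs
      obtain ⟨hFpos, hFle⟩ := prod_bounds (m + 1) z hz hcon
      rw [← hFs] at hF
      have habs : ‖∏ i, (t - z i)‖
          = ‖p‖ * ‖∏ i, (1 - (starRingEnd ℂ) (z i) * t)‖ := by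
        rw [hF, norm_mul, norm_mul, norm_pow, norm_neg, norm_one, one_pow, one_mul]
      have hcontr : ‖∏ i, (t - z i)‖ < ‖∏ i, (t - z i)‖ := by
        calc ‖∏ i, (t - z i)‖
            = ‖p‖ * ‖∏ i, (1 - (starRingEnd ℂ) (z i) * t)‖ := habs
          _ ≤ ‖p‖ * ‖∏ i, (t - z i)‖ :=
              mul_le_mul_of_nonneg_left hFle (norm_nonneg _)
          _ < 1 * ‖∏ i, (t - z i)‖ := mul_lt_mul_of_pos_right hpabs hFpos
          _ = ‖∏ i, (t - z i)‖ := one_mul _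
      exact lt_irrefl _ hcontr
    · intro i
      have hx1 : x i.castSucc = esymC (m + 1) (i.1 + 1) z := (hE i.castSucc).symm
      have hrev : ((i.rev)).1 + 1 = m - i.1 := by
        rw [Fin.val_rev]
        omega
      have hrev2 : m - ((i.rev)).1 = i.1 + 1 := by
        rw [Fin.val_rev]
        omega
      rw [hx1]
      simp only [hcdef]
      rw [hrev, hrev2]
      exact solve_rel hDne
  · rintro ⟨hpabs, c, ⟨w, hw, hwc⟩, hrel⟩
    set p := x (Fin.last m) with hpdef
    have hbc : ∀ i : Fin m, esymC m (i.1 + 1) w = c i := fun i => congrFun hwc i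
    obtain ⟨z, hzS⟩ := symMap_surjective (m + 1)
      (fun j => esymC m (j.1 + 1) w + (starRingEnd ℂ) (esymC m (m + 1 - (j.1 + 1)) w) * p)
    have hzk : ∀ j : Fin (m + 1), esymC (m + 1) (j.1 + 1) z
        = esymC m (j.1 + 1) w + (starRingEnd ℂ) (esymC m (m + 1 - (j.1 + 1)) w) * p :=
      fun j => congrFun hzS j
    have hrelk : ∀ k, k ≤ m + 1 →
        esymC (m + 1) k z = esymC m k w + (starRingEnd ℂ) (esymC m (m + 1 - k) w) * p := by
      intro k hk
      rcases Nat.eq_zero_or_pos k with rfl | hk1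
      · rw [esymC_zero, esymC_zero, Nat.sub_zero, esymC_of_gt (by omega : m < m + 1) w,
          map_zero, zero_mul, add_zero]
      · have hik : ((⟨k - 1, by omega⟩ : Fin (m + 1))).1 + 1 = k := Nat.succ_pred_eq_of_pos hk1
        have h3 := hzk ⟨k - 1, by omega⟩
        rw [hik] at h3
        exact h3
    have hxz : symMap (m + 1) z = x := by
      funext j
      show esymC (m + 1) (j.1 + 1) z = x j
      rw [hzk j]
      refine Fin.lastCases ?_ ?_ j
      · show esymC m (m + 1) w + (starRingEnd ℂ) (esymC m (m + 1 - (m + 1)) w) * p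
          = x (Fin.last m)
        rw [esymC_of_gt (by omega : m < m + 1) w, Nat.sub_self, esymC_zero, map_one,
          one_mul, zero_add, hpdef]
      · intro i
        show esymC m (i.1 + 1) w + (starRingEnd ℂ) (esymC m (m + 1 - (i.1 + 1)) w) * p
          = x i.castSucc
        have hrev : m + 1 - (i.1 + 1) = ((i.rev)).1 + 1 := by
          rw [Fin.val_rev]
          omega
        rw [hrev, hbc i.rev, hbc i, hrel i]
    refine ⟨z, ?_, hxz⟩
    intro j
    by_contra hcon
    push_neg at hcon
    set t := z j with htdef
    have hF0 : (∏ i, (t - z i)) = 0 :=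
      Finset.prod_eq_zero (Finset.mem_univ j) (by rw [htdef, sub_self])
    have hF := master1 m z w p t hrelk
    rw [hF0] at hF
    obtain ⟨hGpos, hGle⟩ := prod_bounds m w hw hcon
    have heq : t * ∏ i, (t - w i)
        = -((-1) ^ (m + 1) * p * ∏ i, (1 - (starRingEnd ℂ) (w i) * t)) := by
      linear_combination -hF
    have habs : ‖t‖ * ‖∏ i, (t - w i)‖
        = ‖p‖ * ‖∏ i, (1 - (starRingEnd ℂ) (w i) * t)‖ := by
      have h4 := congrArg (fun y : ℂ => ‖y‖) heq
      rwa [norm_neg, norm_mul, norm_mul, norm_mul, norm_pow, norm_neg,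
        norm_one, one_pow, one_mul] at h4
    have hlt : ‖p‖ * ‖∏ i, (1 - (starRingEnd ℂ) (w i) * t)‖
        < ‖t‖ * ‖∏ i, (t - w i)‖ := by
      calc ‖p‖ * ‖∏ i, (1 - (starRingEnd ℂ) (w i) * t)‖
          ≤ ‖p‖ * ‖∏ i, (t - w i)‖ :=
            mul_le_mul_of_nonneg_left hGle (norm_nonneg _)
        _ < 1 * ‖∏ i, (t - w i)‖ := mul_lt_mul_of_pos_right hpabs hGpos
        _ ≤ ‖t‖ * ‖∏ i, (t - w i)‖ :=
            mul_le_mul_of_nonneg_right hcon (norm_nonneg _)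
    rw [habs] at hlt
    exact lt_irrefl _ hlt
end

section
/- For n ≥ 2, if (s₁,…,s_{n-1},p) ∈ Γₙ and |p| < 1, then the tuple Q = ((s₁ − conj(s_{n-1})p)/(1−|p|²), (s₂ − conj(s_{n-2})p)/(1−|p|²), …, (s_{n-1} − conj(s₁)p)/(1−|p|²)) belongs to Γ_{n-1}. -/
open Finset

/-- The closed symmetrized polydisc `Γₙ`. -/
noncomputable def closedSymPolydisc (n : ℕ) : Set (Fin n → ℂ) :=
  {x | ∃ z : Fin n → ℂ, (∀ j, ‖z j‖ ≤ 1) ∧ symMap n z = x}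

section Aux

open Polynomial Multiset

lemma esymm_map_hom {R S : Type*} [CommRing R] [CommRing S] (g : R →+* S)
    (s : Multiset R) (k : ℕ) : (s.map ⇑g).esymm k = g (s.esymm k) := by
  rw [Multiset.esymm, Multiset.esymm, Multiset.powersetCard_map, Multiset.map_map,
    map_multiset_sum, Multiset.map_map]
  exact congrArg _ (Multiset.map_congr rfl fun t _ => by
    simp [Function.comp, map_multiset_prod])

lemma esymm_zero' {R : Type*} [CommRing R] (s : Multiset R) : s.esymm 0 = 1 := by
  simp [Multiset.esymm]

lemma esymm_cons {R : Type*} [CommRing R] (b : R) (s : Multiset R) (k : ℕ) :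
    (b ::ₘ s).esymm (k + 1) = s.esymm (k + 1) + b * s.esymm k := by
  rw [Multiset.esymm, Multiset.powersetCard_cons, Multiset.map_add, Multiset.sum_add,
    Multiset.map_map]
  congr 1
  rw [Multiset.esymm, ← Multiset.sum_map_mul_left]
  exact congrArg _ (Multiset.map_congr rfl fun t _ => by simp)

lemma coeff_prod_one_sub {R : Type*} [CommRing R] (s : Multiset R) (k : ℕ) :
    ((s.map fun b => (1 : R[X]) - C b * X).prod).coeff k = (-1) ^ k * s.esymm k := by
  induction s using Multiset.induction generalizing k with
  | empty =>
    cases k with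
    | zero => simp [esymm_zero']
    | succ k => simp [Multiset.esymm, coeff_one, Multiset.powersetCard_zero_right]
  | cons b s ih =>
    rw [Multiset.map_cons, Multiset.prod_cons, sub_mul, one_mul, coeff_sub]
    cases k with
    | zero => simp [ih 0, esymm_zero']
    | succ k =>
      rw [mul_assoc, coeff_C_mul, coeff_X_mul, ih, ih, esymm_cons]
      ring

lemma key_ineq (w t : ℂ) (hw : 1 ≤ ‖w‖) (ht : ‖t‖ ≤ 1) :
    ‖1 - (starRingEnd ℂ) t * w‖ ≤ ‖w - t‖ := by
  have h1 : (1 : ℝ) ≤ Complex.normSq w := by rw [← Complex.sq_norm]; nlinarith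
  have h2 : Complex.normSq t ≤ 1 := by
    rw [← Complex.sq_norm]; nlinarith [norm_nonneg t]
  rw [Complex.norm_def, Complex.norm_def]
  apply Real.sqrt_le_sqrt
  have key : 0 ≤ (Complex.normSq w - 1) * (1 - Complex.normSq t) :=
    mul_nonneg (by linarith) (by linarith)
  simp only [Complex.normSq_apply, Complex.sub_re, Complex.sub_im, Complex.mul_re,
    Complex.mul_im, Complex.one_re, Complex.one_im] at *
  simp only [Complex.conj_re, Complex.conj_im] at *
  nlinarith [key]

end Aux

/-- For `n = m + 1 ≥ 2`, if `(s₁, …, s_{n-1}, p) ∈ Γₙ` (here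
`x i.castSucc = s_{i+1}` for `i : Fin m` and `x (Fin.last m) = p`) and
`|p| < 1`, then the tuple `Q` with `Qᵢ = (sᵢ - conj(s_{n-i}) p) / (1 - |p|²)`
lies in `Γ_{n-1}` (note `x i.rev.castSucc = s_{n-i}` when
`x i.castSucc = s_{i+1}`). -/
theorem Q_mem_closedSymPolydisc (m : ℕ) (hm : 1 ≤ m)
    (x : Fin (m + 1) → ℂ) (hx : x ∈ closedSymPolydisc (m + 1))
    (hp : ‖x (Fin.last m)‖ < 1) :
    (fun i : Fin m =>
        (x i.castSucc - (starRingEnd ℂ) (x i.rev.castSucc) * x (Fin.last m)) /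
          (1 - (‖x (Fin.last m)‖ : ℂ) ^ 2)) ∈ closedSymPolydisc m := by
  classical
  obtain ⟨z, hz, hzx⟩ := hx
  set p : ℂ := x (Fin.last m) with hp_def
  set S : Multiset ℂ := Finset.univ.val.map z with hS
  have hcardS : Multiset.card S = m + 1 := by simp [hS]
  set E : ℕ → ℂ := fun k => S.esymm k with hE
  have hesym : ∀ k, esymC (m+1) k z = E k := fun k => by
    simp only [esymC, hE, hS]
    exact (Finset.esymm_map_val z Finset.univ k).symm
  have hxE : ∀ j : Fin (m+1), x j = E (j.1+1) := fun j =>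
    ((congrFun hzx j).symm).trans (hesym _)
  have hE0 : E 0 = 1 := esymm_zero' S
  have hEtop : ∀ k, m + 1 < k → E k = 0 := by
    intro k hk
    have hzero : Multiset.powersetCard k S = 0 := by
      apply Multiset.eq_zero_of_forall_notMem
      intro t ht
      rw [Multiset.mem_powersetCard] at ht
      have := Multiset.card_le_card ht.1
      omega
    simp [hE, Multiset.esymm, hzero]
  have hEp : E (m+1) = p := (hxE (Fin.last m)).symm
  set D : ℂ := 1 - (‖p‖ : ℂ) ^ 2 with hD
  have hDre : D = 1 - p * (starRingEnd ℂ) p := by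
    rw [hD, Complex.mul_conj]
    norm_cast
    rw [Complex.sq_norm]
  have hD0 : D ≠ 0 := by
    rw [hD]
    have : ((1 - ‖p‖ ^ 2 : ℝ) : ℂ) = 1 - (‖p‖ : ℂ) ^ 2 := by push_cast; ring
    rw [← this, Complex.ofReal_ne_zero]
    nlinarith [norm_nonneg p]
  set c : ℂ := (-1) ^ (m+1) * p with hc
  set F : Polynomial ℂ := (S.map fun t => Polynomial.X - Polynomial.C t).prod with hF
  set G : Polynomial ℂ :=
    ((S.map (starRingEnd ℂ)).map fun b => 1 - Polynomial.C b * Polynomial.X).prod with hG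
  set N : Polynomial ℂ := F - Polynomial.C c * G with hN
  have hFc : ∀ k, k ≤ m + 1 → F.coeff k = (-1) ^ (m+1-k) * E (m+1-k) := by
    intro k hk
    rw [hF, Multiset.prod_X_sub_C_coeff S (by rw [hcardS]; exact hk), hcardS]
  have hFtop : ∀ k, m + 1 < k → F.coeff k = 0 := by
    intro k hk
    apply Polynomial.coeff_eq_zero_of_natDegree_lt
    rw [hF, Polynomial.natDegree_multiset_prod_X_sub_C_eq_card, hcardS]
    exact hk
  have hGc : ∀ k, G.coeff k = (-1) ^ k * (starRingEnd ℂ) (E k) := by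
    intro k
    rw [hG, coeff_prod_one_sub, esymm_map_hom]
  have hNc : ∀ k, k ≤ m →
      N.coeff (k+1) = (-1) ^ (m-k) * (E (m-k) - p * (starRingEnd ℂ) (E (k+1))) := by
    intro k hk
    rw [hN, Polynomial.coeff_sub, Polynomial.coeff_C_mul, hGc, hFc (k+1) (by omega)]
    have h1 : m + 1 - (k+1) = m - k := by omega
    rw [h1, hc]
    have hsign : ((-1 : ℂ)) ^ (m+1) * (-1) ^ (k+1) = (-1) ^ (m-k) := by
      rw [← pow_add]
      have h2 : (m + 1 + (k+1)) = (m - k) + 2*(k+1) := by omega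
      rw [h2, pow_add, pow_mul]
      norm_num
    calc (-1 : ℂ) ^ (m-k) * E (m-k) - (-1) ^ (m+1) * p * ((-1) ^ (k+1) * (starRingEnd ℂ) (E (k+1)))
        = (-1 : ℂ) ^ (m-k) * E (m-k) -
            ((-1) ^ (m+1) * (-1) ^ (k+1)) * (p * (starRingEnd ℂ) (E (k+1))) := by ring
      _ = (-1) ^ (m-k) * (E (m-k) - p * (starRingEnd ℂ) (E (k+1))) := by rw [hsign]; ring
  have hNc0 : N.coeff 0 = 0 := by
    rw [hN, Polynomial.coeff_sub, Polynomial.coeff_C_mul, hGc, hFc 0 (by omega)]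
    simp only [Nat.sub_zero, pow_zero, one_mul, hE0, map_one, mul_one, hEp, hc]
    ring
  have hNtop : N.coeff (m+1) = D := by
    have h := hNc m le_rfl
    rw [Nat.sub_self] at h
    rw [h, hE0, hEp, pow_zero, one_mul, hDre]
  have hNhigh : ∀ k, m + 1 < k → N.coeff k = 0 := by
    intro k hk
    rw [hN, Polynomial.coeff_sub, Polynomial.coeff_C_mul, hGc, hFtop k hk, hEtop k hk]
    simp
  set h : Polynomial ℂ := N.divX with hh
  have hhc : ∀ k, h.coeff k = N.coeff (k+1) := fun k => Polynomial.coeff_divX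
  have hhm : h.coeff m = D := by rw [hhc, hNtop]
  have hdegh : h.natDegree = m := by
    refine le_antisymm (Polynomial.natDegree_le_iff_coeff_eq_zero.mpr fun k hk => ?_)
      (Polynomial.le_natDegree_of_ne_zero (by rw [hhm]; exact hD0))
    rw [hhc]
    exact hNhigh _ (by omega)
  have hh0 : h ≠ 0 := fun h0 => hD0 (by rw [← hhm, h0, Polynomial.coeff_zero])
  have hlead : h.leadingCoeff = D := by rw [Polynomial.leadingCoeff, hdegh, hhm]
  have hXh : Polynomial.X * h = N := by
    have h1 := Polynomial.X_mul_divX_add N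
    rwa [hNc0, map_zero, add_zero] at h1
  set R : Multiset ℂ := h.roots with hR
  have hcardR : Multiset.card R = m := by
    rw [hR, Polynomial.splits_iff_card_roots.mp (IsAlgClosed.splits h), hdegh]
  have hFprod : F = ∏ j : Fin (m+1), (Polynomial.X - Polynomial.C (z j)) := by
    rw [hF, hS, Multiset.map_map]
    rfl
  have hGprod : G = ∏ j : Fin (m+1), (1 - Polynomial.C ((starRingEnd ℂ) (z j)) * Polynomial.X) := by
    rw [hG, hS, Multiset.map_map, Multiset.map_map]
    rfl
  have hroots_le : ∀ w ∈ R, ‖w‖ ≤ 1 := by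
    intro w hw
    by_contra hw1
    push_neg at hw1
    have hNev : N.eval w = 0 := by
      rw [← hXh, Polynomial.eval_mul]
      have h1 : h.eval w = 0 := (Polynomial.mem_roots hh0).mp hw
      rw [h1, mul_zero]
    have hFev : F.eval w = ∏ j, (w - z j) := by
      rw [hFprod, Polynomial.eval_prod]
      simp
    have hGev : G.eval w = ∏ j, (1 - (starRingEnd ℂ) (z j) * w) := by
      rw [hGprod, Polynomial.eval_prod]
      simp
    have hpos : ∀ j, 0 < ‖w - z j‖ := by
      intro j
      rw [norm_pos_iff]
      intro h0
      rw [sub_eq_zero] at h0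
      rw [h0] at hw1
      exact absurd (hz j) (not_le.mpr hw1)
    have hle : ‖G.eval w‖ ≤ ‖F.eval w‖ := by
      rw [hFev, hGev, norm_prod, norm_prod]
      exact Finset.prod_le_prod (fun j _ => norm_nonneg _)
        (fun j _ => key_ineq w (z j) hw1.le (hz j))
    have hFpos : 0 < ‖F.eval w‖ := by
      rw [hFev, norm_prod]
      exact Finset.prod_pos fun j _ => hpos j
    have heq : F.eval w = c * G.eval w := by
      have h2 := hNev
      rw [hN, Polynomial.eval_sub, Polynomial.eval_mul, Polynomial.eval_C, sub_eq_zero] at h2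
      exact h2
    have habs : ‖F.eval w‖ = ‖c‖ * ‖G.eval w‖ := by
      rw [heq, norm_mul]
    have hcabs : ‖c‖ = ‖p‖ := by
      rw [hc, norm_mul, norm_pow]
      norm_num
    rw [hcabs] at habs
    nlinarith [norm_nonneg (G.eval w), norm_nonneg p]
  have hesymmR : ∀ j, j ≤ m →
      R.esymm j = (E j - p * (starRingEnd ℂ) (E (m+1-j))) / D := by
    intro j hj
    have hcard' : Multiset.card h.roots = h.natDegree := by rw [← hR, hcardR, hdegh]
    have hv := Polynomial.coeff_eq_esymm_roots_of_card hcard'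
      (k := m - j) (by rw [hdegh]; omega)
    rw [hlead, hdegh] at hv
    have h1 : m - (m - j) = j := by omega
    have h2 : m - j + 1 = m + 1 - j := by omega
    rw [h1, hhc, hNc (m - j) (by omega), h1, h2, ← hR] at hv
    have hpow : ((-1 : ℂ)) ^ j ≠ 0 := pow_ne_zero _ (by norm_num)
    rw [show D * (-1 : ℂ) ^ j * R.esymm j = (-1 : ℂ) ^ j * (D * R.esymm j) from by ring] at hv
    have hv' := mul_left_cancel₀ hpow hv
    rw [eq_div_iff hD0, hv']
    ring
  set l : List ℂ := R.toList with hl_def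
  have hlen : l.length = m := by rw [hl_def, Multiset.length_toList, hcardR]
  set w : Fin m → ℂ := fun i => l.get (Fin.cast hlen.symm i) with hw
  have hwR : Finset.univ.val.map w = R := by
    rw [Fin.univ_val_map]
    have hofn : List.ofFn w = l := by
      apply List.ext_get (by simp [hlen])
      intro n h1 h2
      simp [hw, List.get_ofFn]
    rw [hofn, hl_def, Multiset.coe_toList]
  refine ⟨w, fun i => ?_, funext fun i => ?_⟩
  · apply hroots_le
    rw [← Multiset.coe_toList R, ← hl_def, Multiset.mem_coe]
    exact List.get_mem _ _
  · show esymC m (i.1+1) w = _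
    have hstep : esymC m (i.1+1) w = R.esymm (i.1+1) := by
      simp only [esymC]
      rw [← Finset.esymm_map_val w Finset.univ, hwR]
    rw [hstep, hesymmR (i.1+1) (by omega)]
    rw [hxE i.castSucc, hxE i.rev.castSucc]
    have h1 : (i.castSucc : Fin (m+1)).1 = i.1 := rfl
    have h2 : (i.rev.castSucc : Fin (m+1)).1 + 1 = m + 1 - (i.1 + 1) := by
      simp only [Fin.coe_castSucc, Fin.val_rev]
      omega
    rw [h1, h2]
    ring
end

section
/- Let a₀, a₁, a₃ be nonnegative real numbers with a₀ ≤ a₁. Then the operator norm of the 2×2 matrix [[a₀, 0], [a₃, a₀ + a₁/4]] is at most the operator norm of the 2×2 matrix [[a₀, 0], [a₁ + a₃, a₀]]. -/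
open Matrix Real

lemma aux_upper (a b d K : ℝ) (ha : 0 ≤ a) (hb : 0 ≤ b) (hd : 0 ≤ d) (hK : 0 ≤ K)
    (H : ∀ u v : ℝ, 0 ≤ u → 0 ≤ v → a^2*u^2 + (b*u + d*v)^2 ≤ K^2*(u^2+v^2)) :
    ‖Matrix.toEuclideanCLM (𝕜 := ℂ) !![(a:ℂ),0;(b:ℂ),(d:ℂ)]‖ ≤ K := by
  apply ContinuousLinearMap.opNorm_le_bound _ hK
  intro x
  set T := Matrix.toEuclideanCLM (𝕜 := ℂ) !![(a:ℂ),0;(b:ℂ),(d:ℂ)]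
  have e0 : (T x) 0 = (a:ℂ) * x 0 := by
    show Matrix.mulVec !![(a:ℂ),0;(b:ℂ),(d:ℂ)] (fun i => x i) 0 = _
    simp [Matrix.mulVec, dotProduct, Fin.sum_univ_two]
  have e1 : (T x) 1 = (b:ℂ) * x 0 + (d:ℂ) * x 1 := by
    show Matrix.mulVec !![(a:ℂ),0;(b:ℂ),(d:ℂ)] (fun i => x i) 1 = _
    simp [Matrix.mulVec, dotProduct, Fin.sum_univ_two]
  rw [EuclideanSpace.norm_eq, EuclideanSpace.norm_eq, Fin.sum_univ_two, Fin.sum_univ_two,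
    e0, e1]
  rw [show K * Real.sqrt (‖x 0‖^2 + ‖x 1‖^2) = Real.sqrt (K^2 * (‖x 0‖^2 + ‖x 1‖^2)) by
    rw [Real.sqrt_mul (by positivity), Real.sqrt_sq hK]]
  apply Real.sqrt_le_sqrt
  have hu : ‖(a:ℂ) * x 0‖ = a * ‖x 0‖ := by simp [abs_of_nonneg ha]
  have tri : ‖(b:ℂ) * x 0 + (d:ℂ) * x 1‖ ≤ b * ‖x 0‖ + d * ‖x 1‖ := by
    refine (norm_add_le _ _).trans ?_
    simp [abs_of_nonneg hb, abs_of_nonneg hd]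
  have key := H ‖x 0‖ ‖x 1‖ (norm_nonneg _) (norm_nonneg _)
  have w0 : (0:ℝ) ≤ ‖(b:ℂ) * x 0 + (d:ℂ) * x 1‖ := norm_nonneg _
  rw [hu]
  nlinarith [sq_nonneg (b * ‖x 0‖ + d * ‖x 1‖)]

lemma aux_lower (a c p : ℝ) (ha : 0 ≤ a) (hc : 0 ≤ c) (hp : 0 < p)
    (hpe : p^2 = c*p + a^2) :
    p ≤ ‖Matrix.toEuclideanCLM (𝕜 := ℂ) !![(a:ℂ),0;(c:ℂ),(a:ℂ)]‖ := by
  set T := Matrix.toEuclideanCLM (𝕜 := ℂ) !![(a:ℂ),0;(c:ℂ),(a:ℂ)]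
  set x : EuclideanSpace ℂ (Fin 2) := (WithLp.equiv 2 (Fin 2 → ℂ)).symm ![(p:ℂ),(a:ℂ)]
  have hx0 : x 0 = (p:ℂ) := rfl
  have hx1 : x 1 = (a:ℂ) := rfl
  have e0 : (T x) 0 = (a:ℂ) * (p:ℂ) := by
    show Matrix.mulVec !![(a:ℂ),0;(c:ℂ),(a:ℂ)] (fun i => x i) 0 = _
    simp [Matrix.mulVec, dotProduct, Fin.sum_univ_two, hx0, hx1]
  have e1 : (T x) 1 = (c:ℂ) * (p:ℂ) + (a:ℂ) * (a:ℂ) := by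
    show Matrix.mulVec !![(a:ℂ),0;(c:ℂ),(a:ℂ)] (fun i => x i) 1 = _
    simp [Matrix.mulVec, dotProduct, Fin.sum_univ_two, hx0, hx1]
  have hxn : ‖x‖ = Real.sqrt (p^2 + a^2) := by
    rw [EuclideanSpace.norm_eq, Fin.sum_univ_two, hx0, hx1]
    simp [abs_of_nonneg ha, abs_of_pos hp]
  have hTx : ‖T x‖ = p * Real.sqrt (p^2 + a^2) := by
    rw [EuclideanSpace.norm_eq, Fin.sum_univ_two, e0, e1]
    have : (c:ℂ) * (p:ℂ) + (a:ℂ) * (a:ℂ) = ((c*p + a*a : ℝ) : ℂ) := by push_cast; ring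
    rw [this, ← Complex.ofReal_mul]
    have n1 : ‖((a*p:ℝ):ℂ)‖ = a*p := by
      rw [Complex.norm_real, Real.norm_eq_abs, abs_of_nonneg (mul_nonneg ha hp.le)]
    have n2 : ‖((c*p + a*a:ℝ):ℂ)‖ = c*p + a*a := by
      rw [Complex.norm_real, Real.norm_eq_abs, abs_of_nonneg (by positivity : (0:ℝ) ≤ c*p + a*a)]
    rw [n1, n2]
    rw [show (a*p)^2 + (c*p + a*a)^2 = p^2 * (p^2 + a^2) by nlinarith [hpe]]
    rw [Real.sqrt_mul (by positivity), Real.sqrt_sq hp.le]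
  have hle := T.le_opNorm x
  rw [hTx, hxn] at hle
  have hs : 0 < Real.sqrt (p^2 + a^2) := Real.sqrt_pos.2 (by positivity)
  exact le_of_mul_le_mul_right (by linarith) hs

set_option maxHeartbeats 1600000 in
/-- For nonnegative reals `a₀ ≤ a₁` and `a₃ ≥ 0`, the operator norm (as an
operator on Euclidean `ℂ²`) of `[[a₀, 0], [a₃, a₀ + a₁/4]]` is at most that of
`[[a₀, 0], [a₁ + a₃, a₀]]`. -/
theorem opNorm_le_case_a0_le_a1 (a₀ a₁ a₃ : ℝ)
    (h₀ : 0 ≤ a₀) (h₁ : 0 ≤ a₁) (h₃ : 0 ≤ a₃) (h : a₀ ≤ a₁) :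
    ‖Matrix.toEuclideanCLM (𝕜 := ℂ)
        (!![(a₀ : ℂ), 0; (a₃ : ℂ), (a₀ : ℂ) + (a₁ : ℂ) / 4])‖ ≤
      ‖Matrix.toEuclideanCLM (𝕜 := ℂ)
        (!![(a₀ : ℂ), 0; (a₁ : ℂ) + (a₃ : ℂ), (a₀ : ℂ)])‖ := by
  set c : ℝ := a₁ + a₃ with hcdef
  by_cases hc : c = 0
  · -- degenerate: a₀ = a₁ = a₃ = 0
    have h1 : a₁ = 0 := by linarith [h₃, h₁]
    have h3 : a₃ = 0 := by linarith
    have h0 : a₀ = 0 := le_antisymm (h.trans_eq h1) h₀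
    subst h1; subst h3
    rw [h0]
    norm_num
  · have hcpos : 0 < c := lt_of_le_of_ne (by positivity) (Ne.symm hc)
    set s₃ : ℝ := Real.sqrt (a₀^2 + a₃^2/4) with hs₃def
    set s : ℝ := Real.sqrt (a₀^2 + c^2/4) with hsdef
    have hs₃0 : 0 ≤ s₃ := Real.sqrt_nonneg _
    have hs0 : 0 ≤ s := Real.sqrt_nonneg _
    have hs₃sq : s₃^2 = a₀^2 + a₃^2/4 := Real.sq_sqrt (by positivity)
    have hssq : s^2 = a₀^2 + c^2/4 := Real.sq_sqrt (by positivity)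
    have hs₃le : s₃ ≤ s := Real.sqrt_le_sqrt (by nlinarith)
    set p : ℝ := c/2 + s with hpdef
    have hppos : 0 < p := by
      have h2 : 0 < c/2 := by linarith
      have := add_pos_of_pos_of_nonneg h2 hs0
      rw [hpdef]; exact this
    have hpe : p^2 = c*p + a₀^2 := by
      have : p^2 = c^2/4 + c*s + s^2 := by rw [hpdef]; ring
      rw [this, hssq]; ring
    -- lower bound
    have hB : p ≤ ‖Matrix.toEuclideanCLM (𝕜 := ℂ)
        (!![(a₀ : ℂ), 0; (a₁ : ℂ) + (a₃ : ℂ), (a₀ : ℂ)])‖ := by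
      have meq : !![(a₀ : ℂ), 0; (a₁ : ℂ) + (a₃ : ℂ), (a₀ : ℂ)]
          = !![(a₀:ℂ), 0; (c:ℂ), (a₀:ℂ)] := by
        rw [show ((c:ℝ):ℂ) = (a₁:ℂ) + (a₃:ℂ) by rw [hcdef]; push_cast; ring]
      rw [meq]
      exact aux_lower a₀ c p h₀ hcpos.le hppos hpe
    -- upper bound
    have split : !![(a₀ : ℂ), 0; (a₃ : ℂ), (a₀ : ℂ) + (a₁ : ℂ) / 4]
        = !![(a₀:ℂ), 0; (a₃:ℂ), (a₀:ℂ)] + !![((0:ℝ):ℂ), 0; ((0:ℝ):ℂ), ((a₁/4 : ℝ):ℂ)] := by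
      ext i j
      fin_cases i <;> fin_cases j <;> simp
    have hN : ‖Matrix.toEuclideanCLM (𝕜 := ℂ) !![(a₀:ℂ), 0; (a₃:ℂ), (a₀:ℂ)]‖ ≤ a₃/2 + s₃ := by
      apply aux_upper a₀ a₃ a₀ (a₃/2 + s₃) h₀ h₃ h₀ (by positivity)
      intro u v hu hv
      have cs : a₃*(u^2-v^2)/2 + 2*a₀*u*v ≤ s₃*(u^2+v^2) := by
        have hsq : (a₃*(u^2-v^2)/2 + 2*a₀*u*v)^2 ≤ (s₃*(u^2+v^2))^2 := by
          have expand : (s₃*(u^2+v^2))^2 = (a₀^2 + a₃^2/4)*(u^2+v^2)^2 := by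
            rw [mul_pow, hs₃sq]
          rw [expand]
          nlinarith [sq_nonneg (a₃*u*v - a₀*(u^2-v^2))]
        have := Real.sqrt_le_sqrt hsq
        rw [Real.sqrt_sq_eq_abs, Real.sqrt_sq_eq_abs] at this
        calc a₃*(u^2-v^2)/2 + 2*a₀*u*v ≤ |a₃*(u^2-v^2)/2 + 2*a₀*u*v| := le_abs_self _
          _ ≤ |s₃*(u^2+v^2)| := this
          _ = s₃*(u^2+v^2) := abs_of_nonneg (by positivity)
      nlinarith [mul_nonneg h₃ (sub_nonneg.2 cs)]
    have hD : ‖Matrix.toEuclideanCLM (𝕜 := ℂ) !![((0:ℝ):ℂ), 0; ((0:ℝ):ℂ), ((a₁/4 : ℝ):ℂ)]‖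
        ≤ a₁/4 := by
      apply aux_upper 0 0 (a₁/4) (a₁/4) le_rfl le_rfl (by positivity) (by positivity)
      intro u v hu hv
      nlinarith [sq_nonneg (a₁*u)]
    have hA : ‖Matrix.toEuclideanCLM (𝕜 := ℂ)
        (!![(a₀ : ℂ), 0; (a₃ : ℂ), (a₀ : ℂ) + (a₁ : ℂ) / 4])‖ ≤ a₃/2 + s₃ + a₁/4 := by
      rw [split, map_add]
      exact (norm_add_le _ _).trans (by linarith)
    have final : a₃/2 + s₃ + a₁/4 ≤ p := by
      rw [hpdef, hcdef]; linarith
    exact le_trans (hA.trans final) hB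
end

section
/- Let R be a commutative unital star-ring and let u₁,…,uₙ ∈ R (n ≥ 2) be unitary elements, i.e. star(u_j)·u_j = 1 = u_j·star(u_j) for each j. Set p = u₁u₂⋯uₙ and c_k = e_k(u₁,…,u_{n-1}), the k-th elementary symmetric polynomial evaluated at u₁,…,u_{n-1}. Then for every i = 1,…,n−1, eᵢ(u₁,…,uₙ) = cᵢ + star(c_{n-i})·p. -/
open Finset

def esymR {R : Type*} [CommRing R] (n k : ℕ) (u : Fin n → R) : R :=
  ∑ t ∈ Finset.powersetCard k (Finset.univ : Finset (Fin n)), ∏ j ∈ t, u j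

lemma univ_fin_succ (m : ℕ) :
    (Finset.univ : Finset (Fin (m + 1))) =
      insert (Fin.last m) (Finset.univ.map Fin.castSuccEmb) := by
  ext x
  simp only [mem_univ, true_iff, mem_insert, mem_map, Fin.coe_castSuccEmb]
  rcases eq_or_lt_of_le (Fin.le_last x) with h | h
  · exact Or.inl h
  · exact Or.inr ⟨x.castPred (Fin.ne_last_of_lt h), by simp⟩

lemma esymR_split {R : Type*} [CommRing R] (m k : ℕ) (u : Fin (m + 1) → R) :
    esymR (m + 1) (k + 1) u =
      esymR m (k + 1) (fun j => u j.castSucc) +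
        esymR m k (fun j => u j.castSucc) * u (Fin.last m) := by
  classical
  have hlast : Fin.last m ∉ (Finset.univ : Finset (Fin m)).map Fin.castSuccEmb := by
    simp [Fin.ext_iff, Fin.castSucc]
    intro x
    omega
  unfold esymR
  rw [univ_fin_succ, powersetCard_succ_insert hlast]
  rw [sum_union]
  · congr 1
    · rw [powersetCard_map, sum_map]
      refine Finset.sum_congr rfl fun t _ => ?_
      exact Finset.prod_map t Fin.castSuccEmb u
    · rw [sum_image (f := fun t => ∏ j ∈ t, u j)]
      · rw [powersetCard_map, sum_map, Finset.sum_mul]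
        refine Finset.sum_congr rfl fun t ht => ?_
        have hl : Fin.last m ∉ t.map Fin.castSuccEmb := by
          intro h
          exact hlast (Finset.mem_of_subset (Finset.map_subset_map.mpr (Finset.subset_univ t)) h)
        rw [show (Finset.mapEmbedding Fin.castSuccEmb).toEmbedding t
            = Finset.map Fin.castSuccEmb t from rfl,
          Finset.prod_insert hl, Finset.prod_map, mul_comm]
        rfl
      · intro a ha b hb hab
        have hla : Fin.last m ∉ a := fun h =>
          hlast ((Finset.mem_powersetCard.mp ha).1 h)
        have hlb : Fin.last m ∉ b := fun h =>
          hlast ((Finset.mem_powersetCard.mp hb).1 h)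
        have := congrArg (fun s => Finset.erase s (Fin.last m)) hab
        simpa [Finset.erase_insert hla, Finset.erase_insert hlb] using this
  · rw [Finset.disjoint_left]
    intro t ht ht'
    obtain ⟨a, _, rfl⟩ := Finset.mem_image.mp ht'
    have := (Finset.mem_powersetCard.mp ht).1 (Finset.mem_insert_self _ _)
    exact hlast this

/-- Let `R` be a commutative unital star-ring and let `u₁, …, uₙ` (`n = m + 1`,
`n ≥ 2`) be unitary elements of `R`.  With `p = u₁ ⋯ uₙ` and
`c_k = e_k(u₁, …, u_{n-1})`, one has
`eᵢ(u₁, …, uₙ) = cᵢ + star (c_{n-i}) * p` for every `i = 1, …, n - 1`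
(here `i : Fin m` encodes the index `i + 1`, so `n - (i+1) = m - i`). -/
theorem esym_unitaries_eq (R : Type*) [CommRing R] [StarRing R]
    (m : ℕ) (hm : 1 ≤ m) (u : Fin (m + 1) → R)
    (hu : ∀ j, star (u j) * u j = 1 ∧ u j * star (u j) = 1) :
    ∀ i : Fin m,
      esymR (m + 1) (i.1 + 1) u =
        esymR m (i.1 + 1) (fun j => u j.castSucc) +
          star (esymR m (m - i.1) (fun j => u j.castSucc)) * ∏ j, u j := by
  classical
  intro i
  rw [esymR_split]
  congr 1
  -- esymR m i.1 v * u (last) = star (esymR m (m - i.1) v) * ∏ j, u j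
  set v : Fin m → R := fun j => u j.castSucc with hv
  rw [Fin.prod_univ_castSucc]
  unfold esymR
  rw [star_sum, Finset.sum_mul, Finset.sum_mul]
  symm
  refine Finset.sum_nbij' (i := fun t => tᶜ) (j := fun t => tᶜ) ?_ ?_ (fun a _ => by simp)
    (fun a _ => by simp) ?_
  · intro t ht
    rw [Finset.mem_powersetCard] at ht ⊢
    have h2 := i.2
    refine ⟨Finset.subset_univ _, ?_⟩
    rw [Finset.card_compl, ht.2, Fintype.card_fin]
    try omega
  · intro t ht
    rw [Finset.mem_powersetCard] at ht ⊢
    have h2 := i.2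
    refine ⟨Finset.subset_univ _, ?_⟩
    rw [Finset.card_compl, ht.2, Fintype.card_fin]
    try omega
  · intro t ht
    rw [Finset.mem_powersetCard] at ht
    rw [star_prod]
    have key : (∏ j ∈ t, star (v j)) * ((∏ j, v j) * u (Fin.last m))
        = (∏ j ∈ tᶜ, v j) * u (Fin.last m) := by
      rw [← Finset.prod_mul_prod_compl t v, ← mul_assoc, ← mul_assoc,
        ← Finset.prod_mul_distrib]
      have : ∀ j ∈ t, star (v j) * v j = 1 := fun j _ => (hu j.castSucc).1
      rw [Finset.prod_congr rfl this, Finset.prod_const_one, one_mul]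
    rw [key]
end
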